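/- For all integers m ≥ 1 and 0 ≤ l ≤ m, one has Σ_{k=m−l+1}^{m+1} C(2m−k+1, m) · C(k−1, m−l) = C(2m+1, l), where C(p,q) denotes the binomial coefficient (with C(p,q) = 0 when q > p). -/
import Mathlib

lemma hockey_aux (r l : ℕ) :
    ∑ j ∈ Finset.range (l + 1), (r + j).choose j = (r + l + 1).choose l := by
  induction l with
  | zero => simp
  | succ l ih =>
      rw [Finset.sum_range_succ, ih]
      exact (Nat.choose_succ_succ (r + l + 1) l).symm

lemma vd_aux : ∀ s r l : ℕ, ∑ j ∈ Finset.range (l + 1),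
    (r + j).choose j * (s + (l - j)).choose (l - j) = (r + s + l + 1).choose l := by
  intro s
  induction s with
  | zero =>
      intro r l
      simp only [Nat.zero_add, Nat.choose_self, mul_one]
      simpa using hockey_aux r l
  | succ s ihs =>
      intro r l
      induction l with
      | zero => simp
      | succ l ihl =>
          rw [Finset.sum_range_succ]
          simp only [Nat.sub_self, Nat.add_zero, Nat.choose_zero_right, mul_one]
          have h1 : ∀ j ∈ Finset.range (l + 1),
              (r + j).choose j * (s + 1 + (l + 1 - j)).choose (l + 1 - j)
                = (r + j).choose j * (s + 1 + (l - j)).choose (l - j)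
                  + (r + j).choose j * (s + (l + 1 - j)).choose (l + 1 - j) := by
            intro j hj
            have hjl : j ≤ l := by simpa [Nat.lt_succ_iff] using hj
            have e1 : l + 1 - j = (l - j) + 1 := by omega
            have e2 : s + 1 + ((l - j) + 1) = (s + 1 + (l - j)) + 1 := by ring
            have e3 : s + ((l - j) + 1) = s + 1 + (l - j) := by ring
            rw [e1, e2, e3, Nat.choose_succ_succ, Nat.mul_add]
          rw [Finset.sum_congr rfl h1, Finset.sum_add_distrib, ihl]
          have h2 : (∑ j ∈ Finset.range (l + 1),
              (r + j).choose j * (s + (l + 1 - j)).choose (l + 1 - j))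
              + (r + (l + 1)).choose (l + 1)
              = (r + s + (l + 1) + 1).choose (l + 1) := by
            have h3 := ihs r (l + 1)
            rw [Finset.sum_range_succ] at h3
            simpa using h3
          rw [add_assoc, h2, show r + s + (l + 1) + 1 = (r + (s + 1) + l + 1) by ring]
          exact (Nat.choose_succ_succ (r + (s + 1) + l + 1) l).symm

/-- `∑_{k=m-l+1}^{m+1} C(2m-k+1, m) C(k-1, m-l) = C(2m+1, l)`. -/
theorem binomial_identity_three (m l : ℕ) (hm : 1 ≤ m) (hl : l ≤ m) :
    ∑ k ∈ Finset.Icc (m - l + 1) (m + 1),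
        (2 * m - k + 1).choose m * (k - 1).choose (m - l) = (2 * m + 1).choose l := by
  rw [← Finset.Ico_add_one_right_eq_Icc, Finset.sum_Ico_eq_sum_range,
    show m + 1 + 1 - (m - l + 1) = l + 1 by omega]
  have key := vd_aux m (m - l) l
  rw [show m - l + m + l + 1 = 2 * m + 1 by omega] at key
  rw [← key]
  apply Finset.sum_congr rfl
  intro j hj
  have hjl : j ≤ l := by simpa [Nat.lt_succ_iff] using hj
  have e1 : 2 * m - (m - l + 1 + j) + 1 = m + (l - j) := by omega
  have e2 : m - l + 1 + j - 1 = m - l + j := by omega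
  rw [e1, e2]
  rw [show (m + (l - j)).choose m = (m + (l - j)).choose (l - j) by
    rw [← Nat.choose_symm (by omega : l - j ≤ m + (l - j)), show m + (l - j) - (l - j) = m by omega]]
  rw [show (m - l + j).choose (m - l) = (m - l + j).choose j by
    rw [← Nat.choose_symm (by omega : j ≤ m - l + j), show m - l + j - j = m - l by omega]]
  ring
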